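/- Let B be an integral domain containing a field k of characteristic zero. Suppose A₁ and A₂ are subrings of B, each factorially closed in B, with A₁ ⊆ A₂, and such that tr.deg_{A₁}(B) = tr.deg_{A₂}(B) = 1. Then A₁ = A₂. In particular, if D, E are nonzero locally nilpotent derivations of B with ker(D) ⊆ ker(E), then ker(D) = ker(E). -/

import Mathlib

variable {k B : Type*} [Field k] [CharZero k] [CommRing B] [IsDomain B] [Algebra k B]

/-- A derivation is locally nilpotent if every element is killed by some iterate. -/
def IsLocallyNilpotentDeriv {R A : Type*} [CommRing R] [CommRing A] [Algebra R A]
    (D : Derivation R A A) : Prop :=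
  ∀ x : A, ∃ n : ℕ, (⇑D)^[n] x = 0

/-- The kernel of a derivation, as a subalgebra. -/
def Derivation.kerSubalgebra {R A : Type*} [CommRing R] [CommRing A] [Algebra R A]
    (D : Derivation R A A) : Subalgebra R A where
  carrier := {b | D b = 0}
  mul_mem' := by
    intro a b ha hb
    simp only [Set.mem_setOf_eq] at *
    rw [D.leibniz]
    simp [ha, hb]
  add_mem' := by
    intro a b ha hb
    simp only [Set.mem_setOf_eq] at *
    simp [ha, hb]
  algebraMap_mem' := by intro r; simp [Set.mem_setOf_eq]

/-- A subalgebra is factorially closed if whenever a product of two nonzero elements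
lies in it, both factors lie in it. -/
def FactoriallyClosed {R A : Type*} [CommRing R] [CommRing A] [Algebra R A]
    (S : Subalgebra R A) : Prop :=
  ∀ a b : A, a ≠ 0 → b ≠ 0 → a * b ∈ S → a ∈ S ∧ b ∈ S

set_option linter.unusedSectionVars false
set_option maxHeartbeats 1000000
set_option synthInstance.maxHeartbeats 400000


theorem isAlgebraic_transfer {R₁ R₂ : Type*} [CommRing R₁] [CommRing R₂]
    [Algebra R₁ B] [Algebra R₂ B] (f : R₁ →+* R₂) (hf : Function.Injective f)
    (hc : ∀ z, algebraMap R₂ B (f z) = algebraMap R₁ B z) {b : B}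
    (h : IsAlgebraic R₁ b) : IsAlgebraic R₂ b := by
  obtain ⟨p, hp0, hpe⟩ := h
  refine ⟨p.map f, fun h0 => hp0 (Polynomial.map_injective f hf (by simpa using h0)), ?_⟩
  rw [Polynomial.aeval_def, Polynomial.eval₂_map]
  rw [Polynomial.aeval_def] at hpe
  rw [show (algebraMap R₂ B).comp f = algebraMap R₁ B from RingHom.ext hc]
  exact hpe

theorem mem_of_isAlgebraic (S : Subalgebra k B) (hS : FactoriallyClosed S) (b : B)
    (hb : IsAlgebraic S b) : b ∈ S := by
  by_cases hb0 : b = 0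
  · rw [hb0]; exact S.zero_mem
  obtain ⟨p, hp0, hpe⟩ := hb
  suffices H : ∀ n (p : Polynomial S), p.natDegree = n → p ≠ 0 →
      Polynomial.aeval b p = 0 → b ∈ S from H _ p rfl hp0 hpe
  intro n
  induction n using Nat.strong_induction_on with
  | _ n IH =>
    intro p hdeg hp0 hpe
    subst hdeg
    have key : Polynomial.aeval b p.divX * b + algebraMap S B (p.coeff 0) = 0 := by
      have h1 : Polynomial.aeval b (p.divX * Polynomial.X + Polynomial.C (p.coeff 0)) = 0 := by
        rw [p.divX_mul_X_add]; exact hpe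
      rw [map_add, map_mul, Polynomial.aeval_X, Polynomial.aeval_C] at h1
      exact h1
    have hCne : p.divX ≠ 0 → p.natDegree ≠ 0 := by
      intro hdx h0
      have := Polynomial.eq_C_of_natDegree_eq_zero h0
      apply hdx
      rw [this]
      exact Polynomial.divX_C _
    by_cases hc : p.coeff 0 = 0
    · rw [hc, map_zero, add_zero] at key
      have hae : Polynomial.aeval b p.divX = 0 := by
        rcases mul_eq_zero.1 key with h | h
        · exact h
        · exact absurd h hb0
      have hdx : p.divX ≠ 0 := by
        intro h0
        apply hp0
        have := p.divX_mul_X_add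
        rw [h0, zero_mul, zero_add, hc, map_zero] at this
        exact this.symm
      have hlt : p.divX.natDegree < p.natDegree := by
        rw [Polynomial.natDegree_divX_eq_natDegree_tsub_one]
        have := hCne hdx
        omega
      exact IH _ hlt _ rfl hdx hae
    · have hprod : Polynomial.aeval b p.divX * b = algebraMap S B (-(p.coeff 0)) := by
        rw [map_neg]; exact eq_neg_of_add_eq_zero_left key
      have hne : algebraMap S B (-(p.coeff 0)) ≠ 0 := by
        rw [Ne, map_eq_zero_iff _ (by exact Subtype.val_injective)]
        simpa using hc
      have hmem : Polynomial.aeval b p.divX * b ∈ S := by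
        rw [hprod]
        exact (-(p.coeff 0)).2
      have ha : Polynomial.aeval b p.divX ≠ 0 := by
        intro h0; rw [h0, zero_mul] at hprod; exact hne hprod.symm
      exact (hS _ _ ha hb0 hmem).2

theorem adjoin_subset_mem {R : Type*} [CommRing R] [Algebra R B] (T : Subalgebra k B)
    {s : Set B} (hR : ∀ r : R, algebraMap R B r ∈ T) (hs : s ⊆ T) :
    ∀ z ∈ Algebra.adjoin R s, z ∈ T := by
  intro z hz
  induction hz using Algebra.adjoin_induction with
  | mem x hx => exact hs hx
  | algebraMap r => exact hR r
  | add x y _ _ hx hy => exact T.add_mem hx hy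
  | mul x y _ _ hx hy => exact T.mul_mem hx hy

theorem isAlgebraic_of_le' {R : Type*} [CommRing R] [Algebra R B] (S : Subalgebra R B)
    (T : Subalgebra k B) (hST : ∀ z ∈ S, z ∈ T) {b : B} (h : IsAlgebraic S b) :
    IsAlgebraic T b :=
  isAlgebraic_transfer
    (f := { toFun := fun z => (⟨z.1, hST z.1 z.2⟩ : T), map_one' := rfl,
            map_mul' := fun _ _ => rfl, map_zero' := rfl, map_add' := fun _ _ => rfl })
    (by intro z w h; apply Subtype.ext; have h2 := congrArg Subtype.val h; exact h2) (fun _ => rfl) h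

theorem main_eq (A₁ A₂ : Subalgebra k B) (h₁ : FactoriallyClosed A₁)
    (h₂ : FactoriallyClosed A₂) (hle : A₁ ≤ A₂)
    (ht₁ : ∃ b : B, IsTranscendenceBasis A₁ (fun _ : Unit => b))
    (ht₂ : ∃ b : B, IsTranscendenceBasis A₂ (fun _ : Unit => b)) : A₁ = A₂ := by
  obtain ⟨b₁, hb₁⟩ := ht₁
  obtain ⟨b₂, hb₂⟩ := ht₂
  haveI : Nontrivial A₁ := ⟨⟨0, 1, fun h => zero_ne_one (α := B) (congrArg Subtype.val h)⟩⟩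
  refine le_antisymm hle ?_
  intro x hx
  refine mem_of_isAlgebraic A₁ h₁ x ?_
  by_contra hxalg
  have hxt : Transcendental (↥A₁) x := hxalg
  have hxi : AlgebraicIndependent (↥A₁) (fun _ : Unit => x) :=
    algebraicIndependent_unique_type_iff.2 hxt
  have halgB : Algebra.IsAlgebraic (Algebra.adjoin (↥A₁) (Set.range fun _ : Unit => b₁)) B :=
    hb₁.isAlgebraic
  have hxadj : IsAlgebraic (Algebra.adjoin (↥A₁) (Set.range fun _ : Unit => b₁)) x :=
    halgB.isAlgebraic x
  have hpair : ¬ AlgebraicIndependent (↥A₁) (fun o : Option Unit => o.elim x (fun _ => b₁)) :=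
    fun hp => ((hb₁.1.option_iff_transcendental x).1 hp) hxadj
  have hswap : ¬ AlgebraicIndependent (↥A₁) (fun o : Option Unit => o.elim b₁ (fun _ => x)) := by
    intro hp
    apply hpair
    refine (algebraicIndependent_equiv' (Equiv.swap (none : Option Unit) (some ())) ?_).2 hp
    funext o
    rcases o with _ | ⟨⟩ <;> simp
  have hb₁adjx : IsAlgebraic (Algebra.adjoin (↥A₁) (Set.range fun _ : Unit => x)) b₁ := by
    by_contra h
    exact hswap ((hxi.option_iff_transcendental b₁).2 h)
  have hb₁A₂ : IsAlgebraic A₂ b₁ :=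
    isAlgebraic_of_le' _ _ (adjoin_subset_mem A₂ (fun r => hle r.2)
      (by rintro _ ⟨_, rfl⟩; exact hx)) hb₁adjx
  have hb₁mem : b₁ ∈ A₂ := mem_of_isAlgebraic A₂ h₂ b₁ hb₁A₂
  have hb₂A₂ : IsAlgebraic A₂ b₂ :=
    isAlgebraic_of_le' _ _ (adjoin_subset_mem A₂ (fun r => hle r.2)
      (by rintro _ ⟨_, rfl⟩; exact hb₁mem)) (halgB.isAlgebraic b₂)
  exact (hb₂.1.transcendental default) hb₂A₂

open Finset in
theorem iter_D_mul (D : Derivation k B B) {n : ℕ} (p q : B) :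
    (⇑D)^[n] (p * q) =
      ∑ k ∈ range n.succ, (n.choose k • ((⇑D)^[n - k] p * (⇑D)^[k] q)) := by
  have Dmul : ∀ u v : B, D (u * v) = D u * v + u * D v := fun u v => by
    rw [D.leibniz, smul_eq_mul, smul_eq_mul]; ring
  have Dsmul : ∀ (m : ℕ) (u : B), D (m • u) = m • D u := fun m u => D.map_smul_of_tower m u
  induction n with
  | zero => simp [Finset.range]
  | succ n IH =>
    calc
      (⇑D)^[n + 1] (p * q) =
          D (∑ k ∈ range n.succ, n.choose k • ((⇑D)^[n - k] p * (⇑D)^[k] q)) := by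
        rw [Function.iterate_succ_apply', IH]
      _ = (∑ k ∈ range n.succ,
            n.choose k • ((⇑D)^[n - k + 1] p * (⇑D)^[k] q)) +
          ∑ k ∈ range n.succ,
            n.choose k • ((⇑D)^[n - k] p * (⇑D)^[k + 1] q) := by
        rw [map_sum]
        simp_rw [Dsmul, Dmul, Function.iterate_succ_apply', smul_add, sum_add_distrib]
      _ = (∑ k ∈ range n.succ,
                n.choose k.succ • ((⇑D)^[n - k] p * (⇑D)^[k + 1] q)) +
              1 • ((⇑D)^[n + 1] p * (⇑D)^[0] q) +
            ∑ k ∈ range n.succ, n.choose k • ((⇑D)^[n - k] p * (⇑D)^[k + 1] q) :=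
        ?_
      _ = ((∑ k ∈ range n.succ, n.choose k • ((⇑D)^[n - k] p * (⇑D)^[k + 1] q)) +
              ∑ k ∈ range n.succ,
                n.choose k.succ • ((⇑D)^[n - k] p * (⇑D)^[k + 1] q)) +
            1 • ((⇑D)^[n + 1] p * (⇑D)^[0] q) := by
        rw [add_comm, add_assoc]
      _ = (∑ i ∈ range n.succ,
              (n + 1).choose (i + 1) • ((⇑D)^[n + 1 - (i + 1)] p * (⇑D)^[i + 1] q)) +
            1 • ((⇑D)^[n + 1] p * (⇑D)^[0] q) := by
        simp_rw [Nat.choose_succ_succ, Nat.succ_sub_succ, add_smul, sum_add_distrib]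
      _ = ∑ k ∈ range n.succ.succ,
            n.succ.choose k • ((⇑D)^[n.succ - k] p * (⇑D)^[k] q) := by
        rw [sum_range_succ' _ n.succ, Nat.choose_zero_right, tsub_zero]
    congr
    refine (sum_range_succ' _ _).trans (congr_arg₂ (· + ·) ?_ ?_)
    · rw [sum_range_succ, Nat.choose_succ_self, zero_smul, add_zero]
      refine sum_congr rfl fun k hk => ?_
      rw [mem_range] at hk
      congr
      omega
    · rw [Nat.choose_zero_right, tsub_zero]

theorem iter_ge (D : Derivation k B B) (x : B) {j : ℕ} (hj : (⇑D)^[j] x = 0) {i : ℕ}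
    (h : j ≤ i) : (⇑D)^[i] x = 0 := by
  obtain ⟨c, rfl⟩ := Nat.exists_eq_add_of_le h
  rw [add_comm, Function.iterate_add_apply, hj]
  exact Function.iterate_fixed (map_zero D) c

theorem ker_fc (D : Derivation k B B) (hLND : IsLocallyNilpotentDeriv D) :
    FactoriallyClosed D.kerSubalgebra := by
  haveI : CharZero B := charZero_of_injective_algebraMap (algebraMap k B).injective
  classical
  intro a b ha hb hab
  have hDab : D (a * b) = 0 := hab
  set Ma := Nat.find (hLND a) - 1 with hMa
  set Mb := Nat.find (hLND b) - 1 with hMb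
  have hfa : 1 ≤ Nat.find (hLND a) := by
    rcases Nat.eq_zero_or_pos (Nat.find (hLND a)) with h | h
    · exact absurd (by simpa [h] using Nat.find_spec (hLND a)) ha
    · exact h
  have hfb : 1 ≤ Nat.find (hLND b) := by
    rcases Nat.eq_zero_or_pos (Nat.find (hLND b)) with h | h
    · exact absurd (by simpa [h] using Nat.find_spec (hLND b)) hb
    · exact h
  have hMa1 : (⇑D)^[Ma + 1] a = 0 := by
    rw [hMa, Nat.sub_add_cancel hfa]; exact Nat.find_spec (hLND a)
  have hMb1 : (⇑D)^[Mb + 1] b = 0 := by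
    rw [hMb, Nat.sub_add_cancel hfb]; exact Nat.find_spec (hLND b)
  have hMane : (⇑D)^[Ma] a ≠ 0 := Nat.find_min (hLND a) (m := Ma) (by omega)
  have hMbne : (⇑D)^[Mb] b ≠ 0 := Nat.find_min (hLND b) (m := Mb) (by omega)
  rcases Nat.eq_zero_or_pos (Ma + Mb) with h0 | hpos
  · have ha0 : D a = 0 := by
      have : Ma = 0 := by omega
      simpa [this] using hMa1
    have hb0 : D b = 0 := by
      have : Mb = 0 := by omega
      simpa [this] using hMb1
    exact ⟨ha0, hb0⟩
  · exfalso
    have hlhs : (⇑D)^[Ma + Mb] (a * b) = 0 := by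
      obtain ⟨s, hs⟩ : ∃ s, Ma + Mb = s + 1 := ⟨Ma + Mb - 1, by omega⟩
      rw [hs, Function.iterate_succ_apply, hDab]
      exact Function.iterate_fixed (map_zero D) s
    have hrhs := iter_D_mul (k := k) D (n := Ma + Mb) a b
    rw [hlhs] at hrhs
    have hsum : ∑ j ∈ Finset.range (Ma + Mb).succ,
        ((Ma + Mb).choose j • ((⇑D)^[Ma + Mb - j] a * (⇑D)^[j] b)) =
        (Ma + Mb).choose Mb • ((⇑D)^[Ma + Mb - Mb] a * (⇑D)^[Mb] b) := by
      refine Finset.sum_eq_single_of_mem Mb (Finset.mem_range.2 (by omega)) ?_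
      intro j hj hne
      rcases lt_or_gt_of_ne hne with h | h
      · have : (⇑D)^[Ma + Mb - j] a = 0 := iter_ge D a hMa1 (by omega)
        rw [this, zero_mul, smul_zero]
      · have : (⇑D)^[j] b = 0 := iter_ge D b hMb1 (by omega)
        rw [this, mul_zero, smul_zero]
    rw [Nat.add_sub_cancel] at hsum
    rw [hsum] at hrhs
    have : (Ma + Mb).choose Mb • ((⇑D)^[Ma] a * (⇑D)^[Mb] b) ≠ 0 := by
      rw [nsmul_eq_mul]
      exact mul_ne_zero (Nat.cast_ne_zero.2 (Nat.choose_pos (by omega)).ne')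
        (mul_ne_zero hMane hMbne)
    exact this hrhs.symm

theorem D_algebraMap_ker (D : Derivation k B B) (a : ↥D.kerSubalgebra) :
    D (algebraMap (↥D.kerSubalgebra) B a) = 0 := a.2

theorem D_aeval (D : Derivation k B B) (r : B) (P : Polynomial (↥D.kerSubalgebra)) :
    D (Polynomial.aeval r P) = Polynomial.aeval r (Polynomial.derivative P) * D r := by
  induction P using Polynomial.induction_on' with
  | add p q hp hq => simp only [map_add, hp, hq]; ring
  | monomial n a =>
    rw [Polynomial.aeval_monomial, Polynomial.derivative_monomial, Polynomial.aeval_monomial,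
      D.leibniz, Derivation.leibniz_pow, D_algebraMap_ker, map_mul, map_natCast]
    simp only [smul_eq_mul, smul_zero, add_zero, nsmul_eq_mul]
    ring

theorem exists_antideriv (D : Derivation k B B) (p : Polynomial (↥D.kerSubalgebra)) :
    ∃ (P : Polynomial (↥D.kerSubalgebra)) (q : ℕ), q ≠ 0 ∧
      Polynomial.derivative P = (q : Polynomial (↥D.kerSubalgebra)) * p := by
  classical
  set A := ↥D.kerSubalgebra
  set d := p.natDegree with hd
  refine ⟨∑ i ∈ Finset.range (d + 1),
      Polynomial.monomial (i + 1) ((((d + 1).factorial / (i + 1) : ℕ) : A) * p.coeff i),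
    (d + 1).factorial, Nat.factorial_ne_zero _, ?_⟩
  rw [Polynomial.derivative_sum]
  have hstep : ∀ i ∈ Finset.range (d + 1),
      Polynomial.derivative (Polynomial.monomial (i + 1)
        ((((d + 1).factorial / (i + 1) : ℕ) : A) * p.coeff i)) =
      Polynomial.monomial i ((((d + 1).factorial : ℕ) : A) * p.coeff i) := by
    intro i hi
    rw [Polynomial.derivative_monomial]
    congr 1
    · have hdvd : (i + 1) ∣ (d + 1).factorial :=
        Nat.dvd_factorial (by omega) (by have := Finset.mem_range.1 hi; omega)
      rw [mul_right_comm, ← Nat.cast_mul, Nat.div_mul_cancel hdvd]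
  rw [Finset.sum_congr rfl hstep]
  conv_rhs => rw [p.as_sum_range]
  rw [Finset.mul_sum]
  refine Finset.sum_congr rfl fun i _ => ?_
  rw [← Polynomial.C_eq_natCast, Polynomial.C_mul_monomial]

theorem ker_charZero (D : Derivation k B B) : CharZero (↥D.kerSubalgebra) := by
  haveI : CharZero B := charZero_of_injective_algebraMap (algebraMap k B).injective
  refine ⟨fun m n h => ?_⟩
  have h2 := congrArg (D.kerSubalgebra.val) h
  rw [map_natCast, map_natCast] at h2
  exact Nat.cast_injective h2

theorem ker_transcendental (D : Derivation k B B) {r : B} (hr : D r ≠ 0) :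
    Transcendental (↥D.kerSubalgebra) r := by
  haveI := ker_charZero D
  intro halg
  obtain ⟨p, hp0, hpe⟩ := halg
  suffices H : ∀ n (p : Polynomial (↥D.kerSubalgebra)), p.natDegree = n → p ≠ 0 →
      Polynomial.aeval r p = 0 → False from H _ p rfl hp0 hpe
  intro n
  induction n using Nat.strong_induction_on with
  | _ n IH =>
    intro p hdeg hp0 hpe
    subst hdeg
    by_cases h0 : p.natDegree = 0
    · have hC := Polynomial.eq_C_of_natDegree_eq_zero h0
      rw [hC, Polynomial.aeval_C] at hpe
      apply hp0
      rw [hC, show p.coeff 0 = 0 from Subtype.val_injective hpe, map_zero]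
    · have hder : Polynomial.aeval r (Polynomial.derivative p) = 0 := by
        have := D_aeval D r p
        rw [hpe, map_zero] at this
        rcases mul_eq_zero.1 this.symm with h | h
        · exact h
        · exact absurd h hr
      have hdne : Polynomial.derivative p ≠ 0 := fun h =>
        h0 (Polynomial.natDegree_eq_zero_of_derivative_eq_zero h)
      exact IH _ (Polynomial.natDegree_derivative_lt h0) _ rfl hdne hder

theorem ker_adjoin_algebraic (D : Derivation k B B) (hLND : IsLocallyNilpotentDeriv D)
    {r : B} (hr : D r ≠ 0) (hr2 : D (D r) = 0) (b : B) :
    IsAlgebraic (Algebra.adjoin (↥D.kerSubalgebra) ({r} : Set B)) b := by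
  haveI : CharZero B := charZero_of_injective_algebraMap (algebraMap k B).injective
  set A := ↥D.kerSubalgebra with hA
  set T := Algebra.adjoin A ({r} : Set B) with hT
  set c := D r with hc
  have hcT : c ∈ T := by
    have : c ∈ D.kerSubalgebra := hr2
    exact (show (⟨c, this⟩ : A).1 ∈ T from T.algebraMap_mem ⟨c, this⟩)
  have hkerT : ∀ x : B, D x = 0 → x ∈ T := fun x hx =>
    (show (⟨x, hx⟩ : A).1 ∈ T from T.algebraMap_mem ⟨x, hx⟩)
  have hrT : r ∈ T := Algebra.subset_adjoin rfl
  have main : ∀ (m : ℕ) (b : B), (⇑D)^[m + 1] b = 0 →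
      ∃ (q : ℕ) (n : ℕ), q ≠ 0 ∧ (q : B) * c ^ n * b ∈ T := by
    intro m
    induction m with
    | zero =>
      intro b hb
      exact ⟨1, 0, one_ne_zero, by simpa using hkerT b (by simpa using hb)⟩
    | succ m IH =>
      intro b hb
      by_cases hDb : D b = 0
      · exact ⟨1, 0, one_ne_zero, by simpa using hkerT b hDb⟩
      obtain ⟨q, n, hq, hmem⟩ := IH (D b) (by
        rw [← Function.iterate_succ_apply]; exact hb)
      -- get polynomial representation
      have : (q : B) * c ^ n * D b ∈ (Polynomial.aeval r : Polynomial A →ₐ[A] B).range := by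
        rw [← Algebra.adjoin_singleton_eq_range_aeval]; exact hmem
      obtain ⟨p, hp⟩ := this
      have hp' : Polynomial.aeval r p = (q : B) * c ^ n * D b := hp
      obtain ⟨P, q₂, hq₂, hder⟩ := exists_antideriv D p
      have hDZ : D (Polynomial.aeval r P) = (q₂ : B) * ((q : B) * c ^ n * D b) * c := by
        rw [D_aeval, hder, map_mul, map_natCast, hp', ← hc]
      have hw : D ((q₂ : B) * (q : B) * c ^ (n + 1) * b - Polynomial.aeval r P) = 0 := by
        rw [map_sub, hDZ]
        have : D ((q₂ : B) * (q : B) * c ^ (n + 1) * b) =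
            (q₂ : B) * (q : B) * c ^ (n + 1) * D b := by
          rw [D.leibniz, smul_eq_mul, smul_eq_mul]
          have hconst : D ((q₂ : B) * (q : B) * c ^ (n + 1)) = 0 := by
            have h1 : D (c ^ (n + 1)) = 0 := by
              rw [Derivation.leibniz_pow, hr2, smul_zero, smul_zero]
            rw [D.leibniz, D.leibniz, D.map_natCast, D.map_natCast]
            simp [h1]
          rw [hconst]
          ring
        rw [this]
        ring
      refine ⟨q₂ * q, n + 1, mul_ne_zero hq₂ hq, ?_⟩
      have : ((q₂ * q : ℕ) : B) * c ^ (n + 1) * b =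
          ((q₂ : B) * (q : B) * c ^ (n + 1) * b - Polynomial.aeval r P) +
            Polynomial.aeval r P := by push_cast; ring
      rw [this]
      exact T.add_mem (hkerT _ hw) (by
        rw [hT, Algebra.adjoin_singleton_eq_range_aeval]
        exact ⟨P, rfl⟩)
  obtain ⟨N, hN⟩ := hLND b
  obtain ⟨q, n, hq, hmem⟩ := main N b (iter_ge D b hN (by omega))
  have hcne : c ≠ 0 := hr
  have hune : (q : B) * c ^ n ≠ 0 :=
    mul_ne_zero (Nat.cast_ne_zero.2 hq) (pow_ne_zero _ hcne)
  have huT : (q : B) * c ^ n ∈ T := T.mul_mem (T.natCast_mem q) (T.pow_mem hcT n)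
  refine ⟨Polynomial.C (⟨(q : B) * c ^ n, huT⟩ : T) * Polynomial.X -
      Polynomial.C (⟨(q : B) * c ^ n * b, hmem⟩ : T), ?_, ?_⟩
  · intro h
    have := congrArg (fun P => Polynomial.coeff P 1) h
    simp only [Polynomial.coeff_sub, Polynomial.coeff_C_mul, Polynomial.coeff_X_one,
      Polynomial.coeff_C, mul_one] at this
    have h2 : (⟨(q : B) * c ^ n, huT⟩ : T) = 0 := by simpa using this
    exact hune (congrArg Subtype.val h2)
  · simp only [map_sub, map_mul, Polynomial.aeval_C, Polynomial.aeval_X]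
    show (q : B) * c ^ n * b - (q : B) * c ^ n * b = 0
    ring

theorem ker_basis (D : Derivation k B B) (hD : D ≠ 0) (hLND : IsLocallyNilpotentDeriv D) :
    ∃ r : B, IsTranscendenceBasis (↥D.kerSubalgebra) (fun _ : Unit => r) := by
  classical
  obtain ⟨x₀, hx₀⟩ : ∃ x, D x ≠ 0 := by
    by_contra h
    push_neg at h
    exact hD (Derivation.ext fun x => by simp [h x])
  set m := Nat.find (hLND x₀) with hm
  have hspec : (⇑D)^[m] x₀ = 0 := Nat.find_spec (hLND x₀)
  have hm2 : 2 ≤ m := by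
    by_contra h
    push_neg at h
    have h1 : (⇑D)^[1] x₀ = 0 := by
      rcases (by omega : m = 0 ∨ m = 1) with h0 | h0
      · rw [h0] at hspec; simp only [Function.iterate_zero, id_eq] at hspec
        rw [hspec] at hx₀; exact absurd (map_zero D) hx₀
      · rw [h0] at hspec; exact hspec
    exact hx₀ (by simpa using h1)
  set r := (⇑D)^[m - 2] x₀ with hrdef
  have hDr : D r = (⇑D)^[m - 1] x₀ := by
    rw [hrdef, show m - 1 = (m - 2) + 1 from by omega, Function.iterate_succ_apply']
  have hrne : D r ≠ 0 := by
    rw [hDr]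
    exact Nat.find_min (hLND x₀) (m := m - 1) (by omega)
  have hr2 : D (D r) = 0 := by
    rw [hDr]
    have h3 : D ((⇑D)^[m - 1] x₀) = (⇑D)^[(m - 1) + 1] x₀ :=
      (Function.iterate_succ_apply' _ _ _).symm
    rw [h3, show (m - 1) + 1 = m from by omega]
    exact hspec
  have hsingle : AlgebraicIndependent (↥D.kerSubalgebra) (fun _ : Unit => r) :=
    algebraicIndependent_unique_type_iff.2 (ker_transcendental D hrne)
  refine ⟨r, hsingle, ?_⟩
  intro s hs hsub
  refine Set.Subset.antisymm hsub ?_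
  intro y hy
  rw [Set.range_const]
  rw [Set.mem_singleton_iff]
  by_contra hyr
  have hrs : r ∈ s := hsub ⟨(), rfl⟩
  have hpair : AlgebraicIndependent (↥D.kerSubalgebra)
      (fun o : Option Unit => o.elim y (fun _ => r)) := by
    have hj : Function.Injective
        (fun o : Option Unit => o.elim (⟨y, hy⟩ : s) (fun _ => ⟨r, hrs⟩)) := by
      intro o1 o2 hh
      rcases o1 with _ | ⟨⟩ <;> rcases o2 with _ | ⟨⟩
      · rfl
      · exact absurd (congrArg Subtype.val hh) hyr
      · exact absurd (congrArg Subtype.val hh).symm hyr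
      · rfl
    have := hs.comp _ hj
    have heq : ((↑) : s → B) ∘ (fun o : Option Unit => o.elim (⟨y, hy⟩ : s)
        (fun _ => ⟨r, hrs⟩)) = fun o : Option Unit => o.elim y (fun _ => r) := by
      funext o; rcases o with _ | ⟨⟩ <;> rfl
    convert this using 1; exact heq.symm
  have htrans : Transcendental (Algebra.adjoin (↥D.kerSubalgebra)
      (Set.range fun _ : Unit => r)) y := (hsingle.option_iff_transcendental y).1 hpair
  apply htrans
  have hrange : (Set.range fun _ : Unit => r) = ({r} : Set B) := Set.range_const
  rw [hrange]
  exact ker_adjoin_algebraic D hLND hrne hr2 y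


/-- Nested factorially closed subalgebras of transcendence degree one coincide; in
particular, kernels of nonzero locally nilpotent derivations satisfying an inclusion
coincide. -/
theorem factorially_closed_trdeg_one_eq
    (A₁ A₂ : Subalgebra k B) (h₁ : FactoriallyClosed A₁) (h₂ : FactoriallyClosed A₂)
    (hle : A₁ ≤ A₂)
    (ht₁ : ∃ b : B, IsTranscendenceBasis A₁ (fun _ : Unit => b))
    (ht₂ : ∃ b : B, IsTranscendenceBasis A₂ (fun _ : Unit => b)) :
    A₁ = A₂ ∧
    ∀ D E : Derivation k B B, D ≠ 0 → E ≠ 0 →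
      IsLocallyNilpotentDeriv D → IsLocallyNilpotentDeriv E →
      D.kerSubalgebra ≤ E.kerSubalgebra → D.kerSubalgebra = E.kerSubalgebra := by
  constructor
  · exact main_eq A₁ A₂ h₁ h₂ hle ht₁ ht₂
  · intro D E hD hE hLD hLE hker
    exact main_eq D.kerSubalgebra E.kerSubalgebra (ker_fc D hLD) (ker_fc E hLE) hker
      (ker_basis D hD hLD) (ker_basis E hE hLE)
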